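/- For every integer k ≥ 1 there exists a polynomial p_k ∈ ℚ[T] such that 𝒵_k = p_k(L) as formal power series in ℚ[[q]]; that is, every generator 𝒵_k can be written as a polynomial with rational coefficients in L. -/

import Mathlib

noncomputable section

/-- The operator `q·d/dq` on formal power series in `q`. -/
def qd (f : PowerSeries ℚ) : PowerSeries ℚ :=
  PowerSeries.mk fun n => (n : ℚ) * PowerSeries.coeff n f

/-- The operator `d/du = (1/L)·q·d/dq`. -/
def du (L f : PowerSeries ℚ) : PowerSeries ℚ := L⁻¹ * qd f

/-- The generators `𝒵_k`: `𝒵₁ = (1/L)(q L'/L + 1/5)` and `𝒵_{k+1} = (d/du) 𝒵_k`. -/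
def Zg (L : PowerSeries ℚ) : ℕ → PowerSeries ℚ
  | 0 => 0
  | 1 => L⁻¹ * (qd L * L⁻¹ + PowerSeries.C (1 / 5 : ℚ))
  | (k + 2) => du L (Zg L (k + 1))

open PowerSeries in
lemma qd_eq (f : PowerSeries ℚ) : qd f = X * d⁄dX ℚ f := by
  ext n
  cases n with
  | zero => simp [qd, coeff_zero_X_mul]
  | succ n =>
      rw [qd, coeff_mk, coeff_succ_X_mul, coeff_derivative]
      push_cast
      ring

open PowerSeries in
lemma qd_mul (f g : PowerSeries ℚ) : qd (f * g) = qd f * g + f * qd g := by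
  rw [qd_eq, qd_eq, qd_eq, Derivation.leibniz, smul_eq_mul, smul_eq_mul]
  ring

open PowerSeries in
lemma qd_add (f g : PowerSeries ℚ) : qd (f + g) = qd f + qd g := by
  rw [qd_eq, qd_eq, qd_eq, map_add]
  ring

open PowerSeries in
lemma qd_sub (f g : PowerSeries ℚ) : qd (f - g) = qd f - qd g := by
  rw [qd_eq, qd_eq, qd_eq, map_sub]
  ring

lemma algC (r : ℚ) : algebraMap ℚ (PowerSeries ℚ) r = PowerSeries.C r := by
  simp [PowerSeries.algebraMap_apply]

open PowerSeries in
lemma qd_C (c : ℚ) : qd (C c) = 0 := by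
  rw [qd_eq]; simp

open PowerSeries in
lemma qd_X : qd (X : PowerSeries ℚ) = X := by
  rw [qd_eq]; simp

open PowerSeries in
lemma qd_aeval (L : PowerSeries ℚ) (p : Polynomial ℚ) :
    qd (Polynomial.aeval L p) = Polynomial.aeval L (Polynomial.derivative p) * qd L := by
  induction p using Polynomial.induction_on with
  | C c => simp [qd_C, Polynomial.aeval_C, ← PowerSeries.algebraMap_apply (R := ℚ), qd_eq]
  | add p q hp hq => rw [map_add, qd_add, hp, hq, map_add, map_add, add_mul]
  | monomial n c h =>
      have e : Polynomial.C c * Polynomial.X ^ (n + 1) =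
          (Polynomial.C c * Polynomial.X ^ n) * Polynomial.X := by ring
      rw [e, map_mul, qd_mul, h, Polynomial.aeval_X]
      simp only [Polynomial.derivative_mul, Polynomial.derivative_X, mul_one, map_add,
        map_mul, Polynomial.aeval_X]
      ring

/-- Every generator `𝒵_k`, `k ≥ 1`, is a polynomial with rational
coefficients in `L = (1 - 5⁵q)^{-1/5}`. -/
theorem statement9 (L : PowerSeries ℚ)
    (hc : PowerSeries.constantCoeff L = 1)
    (hL : L ^ 5 * (1 - 5 ^ 5 * PowerSeries.X) = 1) :
    ∀ k : ℕ, 1 ≤ k → ∃ p : Polynomial ℚ, Zg L k = Polynomial.aeval L p := by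
  have hinv : L⁻¹ * L = 1 := PowerSeries.inv_mul_cancel L (by rw [hc]; exact one_ne_zero)
  have h5 : (5 : PowerSeries ℚ) = PowerSeries.C (5 : ℚ) := (map_ofNat _ 5).symm
  have h1 : qd (L ^ 5) = 5 * L ^ 4 * qd L := by
    have e : L ^ 5 = Polynomial.aeval L (Polynomial.X ^ 5 : Polynomial ℚ) := by simp
    rw [e, qd_aeval]
    simp [Polynomial.derivative_X_pow, algC]
    exact Or.inl (Or.inl (by rw [h5, show (5:ℚ) = 4 + 1 by norm_num, map_add, map_one]))
  have h2 : qd ((1 : PowerSeries ℚ) - 5 ^ 5 * PowerSeries.X) = -(5 ^ 5 * PowerSeries.X) := by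
    have e1 : qd (1 : PowerSeries ℚ) = 0 := by
      rw [← map_one (PowerSeries.C (R := ℚ))]; exact qd_C 1
    have e2 : qd ((5:PowerSeries ℚ) ^ 5 * PowerSeries.X) = 5 ^ 5 * PowerSeries.X := by
      rw [qd_mul, qd_X]
      have : qd ((5:PowerSeries ℚ) ^ 5) = 0 := by
        rw [h5, ← map_pow, qd_C]
      rw [this]; ring
    rw [qd_sub, e1, e2, zero_sub]
  have key : (5 : PowerSeries ℚ) * qd L = L ^ 6 - L := by
    have h0 : qd (L ^ 5 * (1 - 5 ^ 5 * PowerSeries.X)) = 0 := by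
      rw [hL, ← map_one (PowerSeries.C (R := ℚ))]; exact qd_C 1
    rw [qd_mul, h1, h2] at h0
    linear_combination L * h0 + (-L - 5 * qd L) * hL
  have hqdL : qd L = PowerSeries.C (1/5 : ℚ) * (L ^ 6 - L) := by
    rw [← key, h5, ← mul_assoc, ← map_mul]
    norm_num
  have hLinvqd : L⁻¹ * qd L = PowerSeries.C (1/5 : ℚ) * (L ^ 5 - 1) := by
    rw [hqdL]
    have : (L ^ 6 - L) = L * (L ^ 5 - 1) := by ring
    rw [this]
    calc L⁻¹ * (PowerSeries.C (1/5 : ℚ) * (L * (L ^ 5 - 1)))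
        = (L⁻¹ * L) * (PowerSeries.C (1/5 : ℚ) * (L ^ 5 - 1)) := by ring
      _ = PowerSeries.C (1/5 : ℚ) * (L ^ 5 - 1) := by rw [hinv, one_mul]
  intro k hk
  induction k with
  | zero => omega
  | succ n ih =>
    cases n with
    | zero =>
      refine ⟨Polynomial.C (1/5) * Polynomial.X ^ 4, ?_⟩
      show L⁻¹ * (qd L * L⁻¹ + PowerSeries.C (1 / 5 : ℚ)) = _
      have e1 : qd L * L⁻¹ = PowerSeries.C (1/5 : ℚ) * (L ^ 5 - 1) := by
        rw [hqdL]
        calc PowerSeries.C (1/5 : ℚ) * (L ^ 6 - L) * L⁻¹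
            = (L⁻¹ * L) * (PowerSeries.C (1/5 : ℚ) * (L ^ 5 - 1)) := by ring
          _ = PowerSeries.C (1/5 : ℚ) * (L ^ 5 - 1) := by rw [hinv, one_mul]
      rw [e1]
      have e2 : PowerSeries.C (1/5 : ℚ) * (L ^ 5 - 1) + PowerSeries.C (1/5 : ℚ) =
          PowerSeries.C (1/5 : ℚ) * L ^ 5 := by ring
      rw [e2]
      have e3 : L⁻¹ * (PowerSeries.C (1/5 : ℚ) * L ^ 5) =
          (L⁻¹ * L) * (PowerSeries.C (1/5 : ℚ) * L ^ 4) := by ring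
      rw [e3, hinv, one_mul]
      simp [Polynomial.aeval_C, algC]
    | succ m =>
      obtain ⟨p, hp⟩ := ih (by omega)
      refine ⟨Polynomial.derivative p * (Polynomial.C (1/5) * (Polynomial.X ^ 5 - 1)), ?_⟩
      show du L (Zg L (m + 1)) = _
      rw [hp, du, qd_aeval]
      rw [show L⁻¹ * (Polynomial.aeval L (Polynomial.derivative p) * qd L) =
        Polynomial.aeval L (Polynomial.derivative p) * (L⁻¹ * qd L) by ring, hLinvqd]
      simp [Polynomial.aeval_C, algC]

end
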